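/- For all reals r ≥ 0, r' ≥ 0, θ ∈ [0, π] and s ∈ [0, r'], one has arccosh( cosh(r)·cosh(s) − sinh(r)·sinh(s)·cos(θ) ) ≤ max{ arccosh( cosh(r)·cosh(r') − sinh(r)·sinh(r')·cos(θ) ), r }. (In the hyperbolic plane: moving a point radially towards the centre along its ray does not increase its distance to a fixed point beyond the maximum of the original distance and the distance to the centre; this is the convexity of the hyperbolic metric used to contract balls in a cone.) -/

import Mathlib

/-- The inverse hyperbolic cosine, defined (for `x ≥ 1`) by
`arcosh x = log (x + sqrt (x² − 1))`. -/
noncomputable def arcosh (x : ℝ) : ℝ :=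
  Real.log (x + Real.sqrt (x ^ 2 - 1))

lemma arcosh_cosh (r : ℝ) (hr : 0 ≤ r) : arcosh (Real.cosh r) = r := by
  have h1 : Real.cosh r ^ 2 - 1 = Real.sinh r ^ 2 := by
    have := Real.cosh_sq_sub_sinh_sq r; ring_nf; nlinarith [this]
  rw [arcosh, h1, Real.sqrt_sq (Real.sinh_nonneg_iff.2 hr), Real.cosh_add_sinh, Real.log_exp]

lemma arcosh_mono {x y : ℝ} (hx : 1 ≤ x) (hxy : x ≤ y) : arcosh x ≤ arcosh y := by
  apply Real.log_le_log (by positivity)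
  have : Real.sqrt (x ^ 2 - 1) ≤ Real.sqrt (y ^ 2 - 1) := by
    apply Real.sqrt_le_sqrt; nlinarith
  linarith

lemma one_le_f (r s θ : ℝ) (hr : 0 ≤ r) (hs : 0 ≤ s) :
    1 ≤ Real.cosh r * Real.cosh s - Real.sinh r * Real.sinh s * Real.cos θ := by
  have h1 : Real.sinh r * Real.sinh s * Real.cos θ ≤ Real.sinh r * Real.sinh s := by
    have := Real.cos_le_one θ
    nlinarith [mul_nonneg (Real.sinh_nonneg_iff.2 hr) (Real.sinh_nonneg_iff.2 hs)]
  have := Real.one_le_cosh (r - s)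
  rw [Real.cosh_sub] at this
  linarith

/-- radial convexity of the hyperbolic metric: moving a point
radially towards the centre does not increase its distance to a fixed point
beyond the maximum of the original distance and the distance to the centre. -/
theorem cone_radial_convexity (r r' θ s : ℝ) (hr : 0 ≤ r) (hr' : 0 ≤ r')
    (hθ : θ ∈ Set.Icc (0 : ℝ) Real.pi) (hs : s ∈ Set.Icc (0 : ℝ) r') :
    arcosh (Real.cosh r * Real.cosh s - Real.sinh r * Real.sinh s * Real.cos θ) ≤
      max (arcosh (Real.cosh r * Real.cosh r' -
        Real.sinh r * Real.sinh r' * Real.cos θ)) r := by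
  obtain ⟨hs0, hsr'⟩ := hs
  set c : ℝ := (Real.cosh r - Real.sinh r * Real.cos θ) / 2 with hc_def
  set d : ℝ := (Real.cosh r + Real.sinh r * Real.cos θ) / 2 with hd_def
  have hsinh : 0 ≤ Real.sinh r := Real.sinh_nonneg_iff.2 hr
  have hcos1 : Real.cos θ ≤ 1 := Real.cos_le_one θ
  have hcos2 : -1 ≤ Real.cos θ := Real.neg_one_le_cos θ
  have hsc : Real.sinh r ≤ Real.cosh r := by
    have := Real.exp_pos (-r)
    rw [← Real.cosh_sub_sinh r] at this; linarith
  have hc : 0 ≤ c := by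
    have : Real.sinh r * Real.cos θ ≤ Real.sinh r := by nlinarith
    rw [hc_def]; linarith
  have hd : 0 ≤ d := by
    have : -(Real.sinh r) ≤ Real.sinh r * Real.cos θ := by nlinarith
    rw [hd_def]; linarith
  have hf : ∀ x : ℝ, Real.cosh r * Real.cosh x - Real.sinh r * Real.sinh x * Real.cos θ
      = c * Real.exp x + d * Real.exp (-x) := by
    intro x
    simp only [Real.cosh_eq, Real.sinh_eq, hc_def, hd_def]; ring
  have hexp : ConvexOn ℝ Set.univ (fun x : ℝ => Real.exp (-x)) := by
    refine ⟨convex_univ, fun x _ y _ a b ha hb hab => ?_⟩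
    have := convexOn_exp.2 (Set.mem_univ (-x)) (Set.mem_univ (-y)) ha hb hab
    simp only [smul_eq_mul, mul_neg, neg_add] at this ⊢
    linarith [this]
  have hconv : ConvexOn ℝ Set.univ (fun x : ℝ => c * Real.exp x + d * Real.exp (-x)) := by
    have h1 := convexOn_exp.smul hc
    have h2 := hexp.smul hd
    exact h1.add h2
  have hseg : s ∈ segment ℝ (0 : ℝ) r' := by
    rw [segment_eq_Icc hr']; exact ⟨hs0, hsr'⟩
  have hmax := hconv.le_on_segment (Set.mem_univ 0) (Set.mem_univ r') hseg
  rw [← hf s, ← hf 0, ← hf r'] at hmax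
  simp only [Real.cosh_zero, Real.sinh_zero, mul_one, mul_zero, zero_mul, sub_zero] at hmax
  rcases le_max_iff.1 hmax with h | h
  · calc arcosh (Real.cosh r * Real.cosh s - Real.sinh r * Real.sinh s * Real.cos θ)
        ≤ arcosh (Real.cosh r) := arcosh_mono (one_le_f r s θ hr hs0) h
      _ = r := arcosh_cosh r hr
      _ ≤ max _ r := le_max_right _ _
  · exact le_trans (arcosh_mono (one_le_f r s θ hr hs0) h) (le_max_left _ _)
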